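/- (Variance of the response time is at most the squared mean under the EZ diffusion model.) For every a > 0 and every real r ≠ 0, a·(e^{4ar} − 1 − 4ar·e^{2ar}) / (r³·(e^{2ar}+1)²) ≤ a²·(e^{2ar}−1)² / (r²·(e^{2ar}+1)²). -/

import Mathlib

lemma ez_aux_mono : Monotone (fun x : ℝ => x * (Real.exp x + 1) - 2 * (Real.exp x - 1)) := by
  have hd : ∀ x : ℝ, HasDerivAt (fun x : ℝ => x * (Real.exp x + 1) - 2 * (Real.exp x - 1))
      (Real.exp x * (x - 1) + 1) x := by
    intro x
    have h1 : HasDerivAt (fun x : ℝ => x * (Real.exp x + 1))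
        (1 * (Real.exp x + 1) + x * Real.exp x) x :=
      (hasDerivAt_id x).mul ((Real.hasDerivAt_exp x).add_const 1)
    have h2 : HasDerivAt (fun x : ℝ => 2 * (Real.exp x - 1)) (2 * Real.exp x) x :=
      ((Real.hasDerivAt_exp x).sub_const 1).const_mul 2
    have : HasDerivAt (fun x : ℝ => x * (Real.exp x + 1) - 2 * (Real.exp x - 1))
        (1 * (Real.exp x + 1) + x * Real.exp x - 2 * Real.exp x) x := h1.sub h2
    convert this using 1
    ring
  apply monotone_of_deriv_nonneg
  · exact fun x => (hd x).differentiableAt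
  · intro x
    rw [(hd x).deriv]
    have h := Real.add_one_le_exp (-x)
    have hmul : Real.exp x * Real.exp (-x) = 1 := by
      rw [← Real.exp_add]; simp
    nlinarith [Real.exp_pos x, (Real.exp_pos x).le]

theorem ez_var_le_sq_mean (a r : ℝ) (ha : 0 < a) (hr : r ≠ 0) :
    a * (Real.exp (4 * a * r) - 1 - 4 * a * r * Real.exp (2 * a * r)) /
        (r ^ 3 * (Real.exp (2 * a * r) + 1) ^ 2)
      ≤ a ^ 2 * (Real.exp (2 * a * r) - 1) ^ 2 /
        (r ^ 2 * (Real.exp (2 * a * r) + 1) ^ 2) := by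
  set E := Real.exp (2 * a * r) with hE
  have hE4 : Real.exp (4 * a * r) = E ^ 2 := by
    rw [hE, ← Real.exp_nat_mul]; ring_nf
  have hEpos : 0 < E := Real.exp_pos _
  have hE1 : 0 < E + 1 := by linarith
  rw [← sub_nonneg]
  have hmain : a ^ 2 * (E - 1) ^ 2 / (r ^ 2 * (E + 1) ^ 2) -
      a * (Real.exp (4 * a * r) - 1 - 4 * a * r * E) / (r ^ 3 * (E + 1) ^ 2)
      = a * (2 * a * r * (E + 1) - 2 * (E - 1)) / (2 * r ^ 3 * (E + 1)) := by
    rw [hE4]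
    field_simp
    ring
  rw [hmain]
  rcases hr.lt_or_gt with hneg | hpos
  · -- r < 0 : numerator ≤ 0, denominator < 0
    have hkey : 2 * a * r * (E + 1) - 2 * (E - 1) ≤ 0 := by
      have := ez_aux_mono (show (2 * a * r : ℝ) ≤ 0 by nlinarith)
      simp only [Real.exp_zero] at this
      rw [hE]
      nlinarith [this]
    apply div_nonneg_of_nonpos
    · nlinarith
    · nlinarith [pow_pos (neg_pos.mpr hneg) 3]
  · -- r > 0
    have hkey : 0 ≤ 2 * a * r * (E + 1) - 2 * (E - 1) := by
      have := ez_aux_mono (show (0:ℝ) ≤ 2 * a * r by positivity)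
      simp only [Real.exp_zero] at this
      rw [hE]
      nlinarith [this]
    apply div_nonneg
    · nlinarith
    · positivity
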